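/- Let n ≥ 1, let γ ∈ ℂ be a primitive n-th root of unity, and let s, t be invertible n × n complex matrices with s t s⁻¹ t⁻¹ = γ · I_n. If w is an n × n complex matrix that commutes with both s and t (w s = s w and w t = t w), then w is a scalar multiple of the identity: w = c · I_n for some c ∈ ℂ. -/

import Mathlib

/-- Let `γ ∈ ℂ` be a primitive `n`-th root of unity (`γⁿ = 1` and `γᵐ ≠ 1` for
`0 < m < n`) and let `s, t` be invertible `n × n` complex matrices with
`s t s⁻¹ t⁻¹ = γ • I_n`.  Then any matrix `w` commuting with both `s` and `t` is a
scalar multiple of the identity. -/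
theorem commuting_with_projective_commutator_pair_is_scalar
    (n : ℕ) (hn : 1 ≤ n) (γ : ℂ)
    (hγ : γ ^ n = 1 ∧ ∀ m : ℕ, 0 < m → m < n → γ ^ m ≠ 1)
    (s t : (Matrix (Fin n) (Fin n) ℂ)ˣ)
    (h : ((s : Matrix (Fin n) (Fin n) ℂ) * t * (↑s⁻¹ : Matrix (Fin n) (Fin n) ℂ)
            * (↑t⁻¹ : Matrix (Fin n) (Fin n) ℂ))
          = γ • (1 : Matrix (Fin n) (Fin n) ℂ))
    (w : Matrix (Fin n) (Fin n) ℂ)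
    (hws : w * s = (s : Matrix (Fin n) (Fin n) ℂ) * w)
    (hwt : w * t = (t : Matrix (Fin n) (Fin n) ℂ) * w) :
    ∃ c : ℂ, w = c • (1 : Matrix (Fin n) (Fin n) ℂ) := by
  classical
  obtain ⟨hγn, hγprim⟩ := hγ
  haveI : NeZero n := ⟨by omega⟩
  have hγ0 : γ ≠ 0 := by
    intro h0
    rw [h0, zero_pow (by omega)] at hγn
    exact zero_ne_one hγn
  -- basic matrix relation : s t = γ • (t s)
  have hst : (s : Matrix (Fin n) (Fin n) ℂ) * t = γ • ((t : Matrix (Fin n) (Fin n) ℂ) * s) := by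
    have key : ((s⁻¹ : (Matrix (Fin n) (Fin n) ℂ)ˣ) : Matrix (Fin n) (Fin n) ℂ) * ((t⁻¹ : (Matrix (Fin n) (Fin n) ℂ)ˣ) : Matrix (Fin n) (Fin n) ℂ) * ((t : Matrix (Fin n) (Fin n) ℂ) * (s : Matrix (Fin n) (Fin n) ℂ)) = 1 := by
      rw [mul_assoc, ← mul_assoc ((t⁻¹ : (Matrix (Fin n) (Fin n) ℂ)ˣ) : Matrix (Fin n) (Fin n) ℂ),
        Units.inv_mul, one_mul, Units.inv_mul]
    calc (s : Matrix (Fin n) (Fin n) ℂ) * t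
        = (s : Matrix (Fin n) (Fin n) ℂ) * t * (((s⁻¹ : (Matrix (Fin n) (Fin n) ℂ)ˣ) : Matrix (Fin n) (Fin n) ℂ) * ((t⁻¹ : (Matrix (Fin n) (Fin n) ℂ)ˣ) : Matrix (Fin n) (Fin n) ℂ) * ((t : Matrix (Fin n) (Fin n) ℂ) * (s : Matrix (Fin n) (Fin n) ℂ))) := by
          rw [key, mul_one]
      _ = ((s : Matrix (Fin n) (Fin n) ℂ) * t * ↑s⁻¹ * ↑t⁻¹) * (↑t * ↑s) := by
          simp only [mul_assoc]
      _ = γ • ((t : Matrix (Fin n) (Fin n) ℂ) * s) := by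
          rw [h, smul_mul_assoc, one_mul]
  -- pass to endomorphisms
  let e : Matrix (Fin n) (Fin n) ℂ ≃ₐ[ℂ] Module.End ℂ (Fin n → ℂ) := Matrix.toLinAlgEquiv'
  set S : Module.End ℂ (Fin n → ℂ) := e s with hS
  set T : Module.End ℂ (Fin n → ℂ) := e t with hT
  set W : Module.End ℂ (Fin n → ℂ) := e w with hW
  have hST : S * T = γ • (T * S) := by
    rw [hS, hT, ← map_mul, ← map_mul, hst, map_smul]
  have hWS : W * S = S * W := by rw [hW, hS, ← map_mul, ← map_mul, hws]
  have hWT : W * T = T * W := by rw [hW, hT, ← map_mul, ← map_mul, hwt]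
  have hTS : T * S = γ⁻¹ • (S * T) := by
    rw [hST, smul_smul, inv_mul_cancel₀ hγ0, one_smul]
  have hTSk : ∀ k : ℕ, T * S ^ k = (γ⁻¹ ^ k) • (S ^ k * T) := by
    intro k
    induction k with
    | zero => simp
    | succ k ih =>
      rw [pow_succ, ← mul_assoc, ih, smul_mul_assoc, mul_assoc, hTS,
        mul_smul_comm, smul_smul, ← mul_assoc, ← pow_succ, ← pow_succ]
  -- injectivity of images of units
  have hinj : ∀ u : (Matrix (Fin n) (Fin n) ℂ)ˣ, Function.Injective (e ↑u) := by
    intro u x y hxy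
    have key : e ↑u⁻¹ * e ↑u = 1 := by rw [← map_mul, Units.inv_mul, map_one]
    have h2 := congrArg (e ↑u⁻¹) hxy
    rwa [← Module.End.mul_apply, ← Module.End.mul_apply, key,
      Module.End.one_apply, Module.End.one_apply] at h2
  have hSinj : ∀ k : ℕ, Function.Injective (S ^ k) := by
    intro k
    have := hinj (s ^ k)
    rwa [Units.val_pow_eq_pow_val, map_pow] at this
  have hTinj : Function.Injective T := hinj t
  -- eigenvalue of T
  obtain ⟨lam, hlam⟩ := Module.End.exists_eigenvalue T
  obtain ⟨v, hv⟩ := hlam.exists_hasEigenvector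
  have hTv : T v = lam • v := hv.apply_eq_smul
  have hv0 : v ≠ 0 := hv.right
  have hlam0 : lam ≠ 0 := by
    intro h0
    exact hv0 (hTinj (by rw [hTv, h0, zero_smul, map_zero]))
  -- the eigenvector family
  set vk : Fin n → (Fin n → ℂ) := fun k => (S ^ (k : ℕ)) v with hvk
  set mu : Fin n → ℂ := fun k => γ⁻¹ ^ (k : ℕ) * lam with hmu
  have heig : ∀ k : Fin n, T.HasEigenvector (mu k) (vk k) := by
    intro k
    have h1 : T (vk k) = mu k • vk k := by
      have := congrArg (fun f : Module.End ℂ (Fin n → ℂ) => f v) (hTSk (k : ℕ))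
      simpa [hvk, hmu, Module.End.mul_apply, hTv, map_smul, smul_smul] using this
    have h2 : vk k ≠ 0 := fun h0 => hv0 (hSinj (k : ℕ) (by simpa [hvk] using h0))
    exact ⟨Module.End.mem_eigenspace_iff.mpr h1, h2⟩
  have hmukey : ∀ i j : Fin n, (i : ℕ) < (j : ℕ) → mu i ≠ mu j := by
    intro i j hlt hij
    have h1 : γ⁻¹ ^ (i : ℕ) = γ⁻¹ ^ (j : ℕ) := mul_right_cancel₀ hlam0 hij
    have h2 : γ ^ (i : ℕ) = γ ^ (j : ℕ) := by
      rw [inv_pow, inv_pow] at h1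
      exact inv_injective h1
    have h3 : γ ^ ((j : ℕ) - (i : ℕ)) = 1 := by
      have hne0 : γ ^ (i : ℕ) ≠ 0 := pow_ne_zero _ hγ0
      apply mul_right_cancel₀ hne0
      rw [← pow_add, one_mul, Nat.sub_add_cancel (le_of_lt hlt)]
      exact h2.symm
    exact hγprim _ (by omega) (by omega) h3
  have hmuinj : Function.Injective mu := by
    intro i j hij
    by_contra hne
    have hne' : (i : ℕ) ≠ (j : ℕ) := fun hc => hne (Fin.ext hc)
    rcases lt_or_gt_of_ne hne' with hlt | hlt
    · exact hmukey i j hlt hij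
    · exact hmukey j i hlt hij.symm
  have hli : LinearIndependent ℂ vk := T.eigenvectors_linearIndependent' mu hmuinj vk heig
  let b : Module.Basis (Fin n) ℂ (Fin n → ℂ) :=
    basisOfLinearIndependentOfCardEqFinrank hli (by simp)
  have hb : ∀ k, b k = vk k := fun k => by
    rw [show b = basisOfLinearIndependentOfCardEqFinrank hli (by simp) from rfl,
      coe_basisOfLinearIndependentOfCardEqFinrank]
  -- expand W v in the basis
  set c : Fin n → ℂ := fun k => b.repr (W v) k with hc
  have hWv : W v = ∑ k, c k • vk k := by
    conv_lhs => rw [← b.sum_repr (W v)]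
    exact Finset.sum_congr rfl fun k _ => by rw [hb]
  have hTWv : T (W v) = lam • W v := by
    rw [← Module.End.mul_apply, ← hWT, Module.End.mul_apply, hTv, map_smul]
  have hcoeff : ∀ k, (c k * mu k - lam * c k) • vk k = (c k * mu k - lam * c k) • vk k := fun k => rfl
  have hsum : ∑ k, (c k * mu k - lam * c k) • vk k = 0 := by
    have e1 : T (W v) = ∑ k, (c k * mu k) • vk k := by
      rw [hWv, map_sum]
      refine Finset.sum_congr rfl fun k _ => ?_
      rw [map_smul, (heig k).apply_eq_smul, smul_smul]
    have e2 : lam • W v = ∑ k, (lam * c k) • vk k := by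
      rw [hWv, Finset.smul_sum]
      exact Finset.sum_congr rfl fun k _ => by rw [smul_smul]
    calc ∑ k, (c k * mu k - lam * c k) • vk k
        = ∑ k, ((c k * mu k) • vk k - (lam * c k) • vk k) := by
          exact Finset.sum_congr rfl fun k _ => by rw [sub_smul]
      _ = (∑ k, (c k * mu k) • vk k) - ∑ k, (lam * c k) • vk k := by
          rw [Finset.sum_sub_distrib]
      _ = 0 := by rw [← e1, ← e2, hTWv, sub_self]
  have hg := Fintype.linearIndependent_iff.mp hli _ hsum
  have hck : ∀ k : Fin n, k ≠ 0 → c k = 0 := by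
    intro k hk
    have hmu0 : mu 0 = lam := by simp [hmu]
    have hmune : mu k ≠ lam := by
      rw [← hmu0]
      exact fun hc => hk (hmuinj hc)
    have h0 := hg k
    have hfac : c k * (mu k - lam) = 0 := by linear_combination h0
    rcases mul_eq_zero.mp hfac with h' | h'
    · exact h'
    · exact absurd (sub_eq_zero.mp h') hmune
  have hvk0 : vk 0 = v := by simp [hvk]
  have hWv0 : W v = c 0 • v := by
    rw [hWv, Finset.sum_eq_single 0]
    · rw [hvk0]
    · intro k _ hk; rw [hck k hk, zero_smul]
    · intro hk; exact absurd (Finset.mem_univ 0) hk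
  -- W agrees with c 0 • 1 on the basis
  have hWb : ∀ k : Fin n, W (b k) = (c 0 • (1 : Module.End ℂ (Fin n → ℂ))) (b k) := by
    intro k
    have hcw : Commute W S := hWS
    have hcomm : W * S ^ (k : ℕ) = S ^ (k : ℕ) * W := (hcw.pow_right (k : ℕ))
    rw [hb]
    calc W (vk k) = (W * S ^ (k : ℕ)) v := rfl
      _ = (S ^ (k : ℕ)) (W v) := by rw [hcomm]; rfl
      _ = (S ^ (k : ℕ)) (c 0 • v) := by rw [hWv0]
      _ = c 0 • vk k := by rw [map_smul]
      _ = (c 0 • (1 : Module.End ℂ (Fin n → ℂ))) (vk k) := by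
          simp
  have hWfinal : W = c 0 • (1 : Module.End ℂ (Fin n → ℂ)) := b.ext hWb
  refine ⟨c 0, ?_⟩
  apply e.injective
  rw [map_smul, map_one]
  exact hWfinal
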